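/- For each k ∈ ℕ, the function g(ξ) = cos(ξ)·√(ξ²/sin(ξ)² − 1) + argcosh(−ξ/sin(ξ)), defined for ξ in the interval I_k = ((2k+1)π, (2k+3/2)π) (where sin(ξ) < 0 and −ξ/sin(ξ) ≥ 1), has exactly one zero in I_k: g is strictly increasing on I_k, tends to −∞ as ξ → (2k+1)π⁺, and is positive at ξ = (2k+3/2)π. -/

import Mathlib

open Set

/-- Inverse hyperbolic cosine on `[1, ∞)`. -/
noncomputable def arcosh (x : ℝ) : ℝ := Real.log (x + Real.sqrt (x ^ 2 - 1))

lemma sin_neg_on (k : ℕ) {ξ : ℝ} (h1 : (2 * (k : ℝ) + 1) * Real.pi < ξ)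
    (h2 : ξ ≤ (2 * (k : ℝ) + 3 / 2) * Real.pi) : Real.sin ξ < 0 := by
  have hπ := Real.pi_pos
  have e1 : Real.sin (ξ - (k : ℤ) * (2 * Real.pi)) = Real.sin ξ :=
    Real.sin_sub_int_mul_two_pi ξ k
  have e2 : Real.sin (ξ - (k : ℤ) * (2 * Real.pi) - Real.pi)
      = -Real.sin (ξ - (k : ℤ) * (2 * Real.pi)) := Real.sin_sub_pi _
  have hp : 0 < Real.sin (ξ - (k : ℤ) * (2 * Real.pi) - Real.pi) := by
    apply Real.sin_pos_of_pos_of_lt_pi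
    · push_cast; linarith
    · push_cast; linarith
  linarith [e1, e2, hp]

lemma cos_le_on (k : ℕ) {ξ : ℝ} (h1 : (2 * (k : ℝ) + 1) * Real.pi ≤ ξ)
    (h2 : ξ ≤ (2 * (k : ℝ) + 1) * Real.pi + Real.pi / 3) : Real.cos ξ ≤ -(1 / 2) := by
  have hπ := Real.pi_pos
  have e1 : Real.cos (ξ - (k : ℤ) * (2 * Real.pi)) = Real.cos ξ :=
    Real.cos_sub_int_mul_two_pi ξ k
  have e2 : Real.cos (ξ - (k : ℤ) * (2 * Real.pi) - Real.pi)
      = -Real.cos (ξ - (k : ℤ) * (2 * Real.pi)) := Real.cos_sub_pi _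
  have hp : Real.cos (Real.pi / 3) ≤ Real.cos (ξ - (k : ℤ) * (2 * Real.pi) - Real.pi) := by
    apply Real.cos_le_cos_of_nonneg_of_le_pi
    · push_cast; linarith
    · linarith
    · push_cast; linarith
  rw [Real.cos_pi_div_three] at hp
  linarith [e1, e2, hp]

lemma g_hasDerivAt (ξ : ℝ) (hs : Real.sin ξ < 0) (hx : 1 < ξ) :
    HasDerivAt (fun ξ => Real.cos ξ * Real.sqrt (ξ ^ 2 / Real.sin ξ ^ 2 - 1)
      + arcosh (-(ξ / Real.sin ξ)))
      ((-Real.sin ξ * (ξ ^ 2 / Real.sin ξ ^ 2 - 1)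
        - (ξ * Real.cos ξ - Real.sin ξ) ^ 2 / Real.sin ξ ^ 3)
        / Real.sqrt (ξ ^ 2 / Real.sin ξ ^ 2 - 1)) ξ := by
  have hs0 : Real.sin ξ ≠ 0 := hs.ne
  have hsneg : 0 < -Real.sin ξ := by linarith
  have hsle : -Real.sin ξ ≤ 1 := by
    have := Real.neg_one_le_sin ξ; linarith
  have hx0 : 0 < ξ := by linarith
  have hu : 1 < -(ξ / Real.sin ξ) := by
    rw [← div_neg]
    rw [lt_div_iff₀ hsneg]
    nlinarith
  have hu0 : 0 < -(ξ / Real.sin ξ) := by linarith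
  have hw : 0 < ξ ^ 2 / Real.sin ξ ^ 2 - 1 := by
    have h : (-(ξ / Real.sin ξ)) ^ 2 - 1 = ξ ^ 2 / Real.sin ξ ^ 2 - 1 := by
      rw [neg_sq, div_pow]
    rw [← h]
    nlinarith
  have hkey : (-(ξ / Real.sin ξ)) ^ 2 - 1 = ξ ^ 2 / Real.sin ξ ^ 2 - 1 := by
    rw [neg_sq, div_pow]
  have hr : 0 < Real.sqrt (ξ ^ 2 / Real.sin ξ ^ 2 - 1) := Real.sqrt_pos.mpr hw
  have hr2 : Real.sqrt (ξ ^ 2 / Real.sin ξ ^ 2 - 1) ^ 2 = ξ ^ 2 / Real.sin ξ ^ 2 - 1 :=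
    Real.sq_sqrt hw.le
  -- derivative of w = ξ²/sin²ξ - 1
  have h1 : HasDerivAt (fun x : ℝ => x ^ 2 / Real.sin x ^ 2 - 1)
      ((2 * ξ ^ 1 * Real.sin ξ ^ 2 - ξ ^ 2 * (2 * Real.sin ξ ^ 1 * Real.cos ξ))
        / (Real.sin ξ ^ 2) ^ 2) ξ := by
    have := ((hasDerivAt_pow 2 ξ).div ((Real.hasDerivAt_sin ξ).pow 2)
      (pow_ne_zero 2 hs0)).sub_const 1
    convert this using 1
    · rfl
    · rfl
    · rfl
    · norm_num
  have h2 := h1.sqrt hw.ne'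
  have h3 := (Real.hasDerivAt_cos ξ).mul h2
  -- derivative of u = -(ξ/sin ξ)
  have h4 : HasDerivAt (fun x : ℝ => -(x / Real.sin x))
      (-((1 * Real.sin ξ - ξ * Real.cos ξ) / Real.sin ξ ^ 2)) ξ :=
    ((hasDerivAt_id ξ).div (Real.hasDerivAt_sin ξ) hs0).neg
  have h5 := ((h4.pow 2).sub_const 1).sqrt (by simp only [Pi.pow_apply]; rw [hkey]; exact hw.ne')
  have h6 := h4.add h5
  have hinner : 0 < -(ξ / Real.sin ξ) + Real.sqrt ((-(ξ / Real.sin ξ)) ^ 2 - 1) := by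
    have := Real.sqrt_nonneg ((-(ξ / Real.sin ξ)) ^ 2 - 1)
    linarith
  have h7 := h6.log hinner.ne'
  have h8 := h3.add h7
  have harc : (fun ξ => Real.cos ξ * Real.sqrt (ξ ^ 2 / Real.sin ξ ^ 2 - 1)
      + arcosh (-(ξ / Real.sin ξ)))
      = fun x => Real.cos x * Real.sqrt (x ^ 2 / Real.sin x ^ 2 - 1)
        + Real.log (-(x / Real.sin x) + Real.sqrt ((-(x / Real.sin x)) ^ 2 - 1)) := by
    funext x; rw [arcosh]
  rw [harc]
  convert h8 using 1
  · rfl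
  · rfl
  · rfl
  simp only [Pi.pow_apply, Pi.add_apply]
  rw [hkey]
  set s := Real.sin ξ with hsdef
  set c := Real.cos ξ with hcdef
  set r := Real.sqrt (ξ ^ 2 / s ^ 2 - 1) with hrdef
  have hur : 0 < -(ξ / s) + r := by rw [hkey] at hinner; exact hinner
  have haux : (-((1 * s - ξ * c) / s ^ 2) +
      (2 : ℕ) * (-(ξ / s)) ^ (2 - 1) * -((1 * s - ξ * c) / s ^ 2) / (2 * r)) /
      (-(ξ / s) + r) = -((1 * s - ξ * c) / s ^ 2) / r := by
    rw [div_eq_div_iff hur.ne' hr.ne']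
    field_simp
    have hss : s * s⁻¹ = 1 := mul_inv_cancel₀ hs0
    linear_combination (2 * s * ξ - 2 * ξ ^ 2 * c) * hss
  rw [haux]
  rw [← hr2]
  field_simp
  ring

set_option maxHeartbeats 1000000 in
/-- For every `k ∈ ℕ`, the function
`g(ξ) = cos(ξ)√(ξ²/sin(ξ)² - 1) + argcosh(-ξ/sin ξ)` has exactly one zero in
the interval `I_k = ((2k+1)π, (2k+3/2)π]`: it is strictly increasing there,
tends to `-∞` at the left endpoint, and is positive at the right endpoint. -/
theorem g_unique_zero (k : ℕ)
    (g : ℝ → ℝ)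
    (hg : g = fun ξ => Real.cos ξ * Real.sqrt (ξ ^ 2 / Real.sin ξ ^ 2 - 1)
      + arcosh (-(ξ / Real.sin ξ))) :
    StrictMonoOn g (Ioc ((2 * k + 1) * Real.pi) ((2 * k + 3 / 2) * Real.pi))
    ∧ Filter.Tendsto g (nhdsWithin ((2 * k + 1) * Real.pi) (Ioi ((2 * k + 1) * Real.pi))) Filter.atBot
    ∧ 0 < g ((2 * k + 3 / 2) * Real.pi)
    ∧ ∃! ξ : ℝ, ξ ∈ Ioc ((2 * k + 1) * Real.pi) ((2 * k + 3 / 2) * Real.pi) ∧ g ξ = 0 := by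
  have hπ := Real.pi_pos
  have hπ3 := Real.pi_gt_three
  set A := (2 * (k : ℝ) + 1) * Real.pi with hA
  set B := (2 * (k : ℝ) + 3 / 2) * Real.pi with hB
  have hk0 : (0 : ℝ) ≤ (k : ℝ) := Nat.cast_nonneg k
  have hAB : A + Real.pi / 2 = B := by rw [hA, hB]; ring
  have hA3 : 3 < A := by nlinarith
  have hAltB : A < B := by linarith
  have hsin : ∀ ξ ∈ Ioc A B, Real.sin ξ < 0 := fun ξ h => sin_neg_on k h.1 h.2
  have hgt1 : ∀ ξ ∈ Ioc A B, 1 < ξ := fun ξ h => by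
    have := h.1; linarith
  have hcont : ContinuousOn g (Ioc A B) := by
    intro ξ hξ
    have hd := g_hasDerivAt ξ (hsin ξ hξ) (hgt1 ξ hξ)
    rw [← hg] at hd
    exact hd.continuousAt.continuousWithinAt
  -- strict monotonicity
  have hmono : StrictMonoOn g (Ioc A B) := by
    apply strictMonoOn_of_deriv_pos (convex_Ioc A B) hcont
    intro x hx
    rw [interior_Ioc] at hx
    have hs := hsin x ⟨hx.1, hx.2.le⟩
    have hx1 : 1 < x := by have := hx.1; linarith
    have hd := g_hasDerivAt x hs hx1
    rw [← hg] at hd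
    rw [hd.deriv]
    have hu : 1 < -(x / Real.sin x) := by
      have hsneg : 0 < -Real.sin x := by linarith
      have hsle : -Real.sin x ≤ 1 := by have := Real.neg_one_le_sin x; linarith
      rw [← div_neg, lt_div_iff₀ hsneg]
      nlinarith
    have hw : 0 < x ^ 2 / Real.sin x ^ 2 - 1 := by
      have h : (-(x / Real.sin x)) ^ 2 - 1 = x ^ 2 / Real.sin x ^ 2 - 1 := by
        rw [neg_sq, div_pow]
      rw [← h]; nlinarith
    apply div_pos
    · have h1 : 0 < -Real.sin x * (x ^ 2 / Real.sin x ^ 2 - 1) := by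
        apply mul_pos (by linarith) hw
      have h2 : (x * Real.cos x - Real.sin x) ^ 2 / Real.sin x ^ 3 ≤ 0 := by
        apply div_nonpos_of_nonneg_of_nonpos (sq_nonneg _)
        nlinarith
      linarith
    · exact Real.sqrt_pos.mpr hw
  -- value at the right endpoint
  have hsinB : Real.sin B = -1 := by
    have hBeq : B = Real.pi + Real.pi / 2 + (k : ℤ) * (2 * Real.pi) := by
      rw [hB]; push_cast; ring
    rw [hBeq, Real.sin_add_int_mul_two_pi, Real.sin_add]
    simp
  have hcosB : Real.cos B = 0 := by
    have hBeq : B = Real.pi + Real.pi / 2 + (k : ℤ) * (2 * Real.pi) := by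
      rw [hB]; push_cast; ring
    rw [hBeq, Real.cos_add_int_mul_two_pi, Real.cos_add]
    simp
  have hBpos : 0 < g B := by
    rw [hg]
    simp only [hsinB, hcosB, arcosh]
    have h1 : -(B / (-1 : ℝ)) = B := by ring
    rw [h1, zero_mul, zero_add]
    apply Real.log_pos
    have := Real.sqrt_nonneg (B ^ 2 - 1)
    linarith
  -- tendsto atBot at the left endpoint
  have hsinA : Real.sin A = 0 := by
    have : A = ((2 * (k : ℤ) + 1) : ℤ) * Real.pi := by rw [hA]; push_cast; ring
    rw [this, Real.sin_int_mul_pi]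
  have hunear : ∀ᶠ ξ in nhdsWithin A (Ioi A), ξ ∈ Ioo A (A + Real.pi / 3) :=
    Ioo_mem_nhdsGT_of_mem ⟨le_refl A, by linarith⟩
  have hmemB : ∀ᶠ ξ in nhdsWithin A (Ioi A), ξ ∈ Ioo A B :=
    Ioo_mem_nhdsGT_of_mem ⟨le_refl A, hAltB⟩
  have hsin_tend : Filter.Tendsto (fun ξ => -Real.sin ξ) (nhdsWithin A (Ioi A))
      (nhdsWithin 0 (Ioi 0)) := by
    rw [tendsto_nhdsWithin_iff]
    constructor
    · have := (Real.continuous_sin.neg.tendsto A).mono_left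
        (nhdsWithin_le_nhds (s := Ioi A))
      rwa [Pi.neg_apply, hsinA, neg_zero] at this
    · filter_upwards [hmemB] with ξ hξ
      have := sin_neg_on k hξ.1 (le_of_lt hξ.2)
      exact mem_Ioi.mpr (by linarith)
  have hu_tend : Filter.Tendsto (fun ξ => -(ξ / Real.sin ξ)) (nhdsWithin A (Ioi A))
      Filter.atTop := by
    have h2 : Filter.Tendsto (fun ξ => (-Real.sin ξ)⁻¹) (nhdsWithin A (Ioi A))
        Filter.atTop := tendsto_inv_nhdsGT_zero.comp hsin_tend
    have hid : Filter.Tendsto (fun ξ : ℝ => ξ) (nhdsWithin A (Ioi A)) (nhds A) :=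
      Filter.tendsto_id.mono_left nhdsWithin_le_nhds
    have h3 := Filter.Tendsto.pos_mul_atTop (show (0 : ℝ) < A by linarith) hid h2
    refine h3.congr fun ξ => ?_
    rw [← div_eq_mul_inv, div_neg]
  have hlog8 : ∀ᶠ x in Filter.atTop, Real.log x ≤ x / 8 := by
    have h := Real.isLittleO_log_id_atTop.def (show (0 : ℝ) < 1 / 8 by norm_num)
    filter_upwards [h, Filter.eventually_ge_atTop (0 : ℝ)] with x h1 h2
    rw [Real.norm_eq_abs, Real.norm_eq_abs, id] at h1
    have := le_abs_self (Real.log x)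
    rw [abs_of_nonneg h2] at h1
    linarith
  have hloge : ∀ᶠ ξ in nhdsWithin A (Ioi A),
      Real.log (-(ξ / Real.sin ξ)) ≤ (-(ξ / Real.sin ξ)) / 8 := hu_tend.eventually hlog8
  have hbound : ∀ᶠ ξ in nhdsWithin A (Ioi A),
      g ξ ≤ Real.log 2 - (-(ξ / Real.sin ξ)) / 8 := by
    filter_upwards [hunear, hloge] with ξ hξ hlg
    have hsx : Real.sin ξ < 0 := sin_neg_on k hξ.1 (by linarith [hξ.2])
    rw [hg]
    simp only [arcosh]
    set s := Real.sin ξ with hsdef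
    set u := -(ξ / s) with hudef
    have hsneg : 0 < -s := by linarith
    have hsle : -s ≤ 1 := by have := Real.neg_one_le_sin ξ; linarith
    have hξA : A < ξ := hξ.1
    have hξ3 : 3 < ξ := by linarith
    have h2u : ξ ≤ u := by
      rw [hudef, ← div_neg, le_div_iff₀ hsneg]
      nlinarith
    have hu3 : 3 < u := by linarith
    have hkey : ξ ^ 2 / s ^ 2 - 1 = u ^ 2 - 1 := by
      rw [hudef, neg_sq, div_pow]
    rw [hkey]
    set r := Real.sqrt (u ^ 2 - 1) with hrdef
    have hr0 : 0 ≤ r := Real.sqrt_nonneg _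
    have hr2 : r ^ 2 = u ^ 2 - 1 := Real.sq_sqrt (by nlinarith)
    have hrle : r ≤ u := by
      rw [hrdef]
      calc Real.sqrt (u ^ 2 - 1) ≤ Real.sqrt (u ^ 2) :=
            Real.sqrt_le_sqrt (by linarith)
        _ = u := Real.sqrt_sq (by linarith)
    have hrge : u / 2 ≤ r := by
      have h : (u / 2) ^ 2 ≤ u ^ 2 - 1 := by clear_value s u; nlinarith [sq_nonneg (u - 3)]
      calc u / 2 = Real.sqrt ((u / 2) ^ 2) :=
            (Real.sqrt_sq (show (0:ℝ) ≤ u / 2 by clear_value s u; linarith)).symm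
        _ ≤ r := Real.sqrt_le_sqrt h
    have hcos : Real.cos ξ ≤ -(1 / 2) := cos_le_on k hξA.le (le_of_lt hξ.2)
    have hlogur : Real.log (u + r) ≤ Real.log 2 + Real.log u := by
      rw [← Real.log_mul (by norm_num) (by linarith)]
      exact Real.log_le_log (by linarith) (by linarith)
    have hmul : Real.cos ξ * r ≤ -(1 / 2) * r := mul_le_mul_of_nonneg_right hcos hr0
    have hlu : Real.log u ≤ u / 8 := hlg
    clear_value s u r
    linarith
  have hφ : Filter.Tendsto (fun ξ => Real.log 2 - (-(ξ / Real.sin ξ)) / 8)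
      (nhdsWithin A (Ioi A)) Filter.atBot := by
    have h1 : Filter.Tendsto (fun ξ => (-(ξ / Real.sin ξ)) / 8) (nhdsWithin A (Ioi A))
        Filter.atTop := hu_tend.atTop_div_const (by norm_num)
    have h2 : Filter.Tendsto (fun ξ => -((-(ξ / Real.sin ξ)) / 8)) (nhdsWithin A (Ioi A))
        Filter.atBot := Filter.tendsto_neg_atTop_atBot.comp h1
    have h3 := Filter.tendsto_atBot_add_const_left _ (Real.log 2) h2
    refine h3.congr fun ξ => ?_
    ring
  have htend : Filter.Tendsto g (nhdsWithin A (Ioi A)) Filter.atBot :=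
    Filter.tendsto_atBot_mono' _ hbound hφ
  refine ⟨hmono, htend, hBpos, ?_⟩
  -- unique zero
  obtain ⟨ξ0, hg0, hmem0⟩ :=
    ((htend.eventually (Filter.eventually_lt_atBot 0)).and hmemB).exists
  have hsub : Icc ξ0 B ⊆ Ioc A B := fun x hx => ⟨lt_of_lt_of_le hmem0.1 hx.1, hx.2⟩
  have hivt := intermediate_value_Icc (le_of_lt hmem0.2) (hcont.mono hsub)
  obtain ⟨ξ, hξIcc, hgξ⟩ := hivt ⟨hg0.le, hBpos.le⟩
  refine ⟨ξ, ⟨hsub hξIcc, hgξ⟩, ?_⟩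
  rintro y ⟨hymem, hy⟩
  exact hmono.injOn hymem (hsub hξIcc) (by rw [hy, hgξ])
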